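/- arXiv:2106.01018 — 2 statements merged into one kernel-verified Lean document; each statement's English description precedes it below -/
import Mathlib

section
/- Let n ∈ ℕ₀, η > 0, and let F₀, …, F_n : ℂ → ℂ be entire functions. Define the polyanalytic function F(z) = Σ_{k=0}^{n} F_k(z)·(conj z)^k. If F(z) = 0 for every z ∈ ℂ with |z| = ηk for some positive integer k, then F is identically zero on ℂ (equivalently, all F_k are identically zero). -/
noncomputable section
open Complex
open scoped Real ComplexConjugate
open Filter

lemma circle_freq (r : ℝ) (hr : 0 < r) (H : ℂ → ℂ)
    (h : ∀ z : ℂ, ‖z‖ = r → H z = 0) :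
    ∃ᶠ z in nhdsWithin (r : ℂ) {(r:ℂ)}ᶜ, H z = 0 := by
  set u : ℕ → ℂ := fun m => (r : ℂ) * Complex.exp (((1 / (m + 1) : ℝ) : ℂ) * Complex.I) with hu
  have habs : ∀ m, ‖u m‖ = r := by
    intro m
    rw [hu]
    simp only [norm_mul, Complex.norm_exp_ofReal_mul_I, Complex.norm_real, Real.norm_eq_abs, abs_of_pos hr, mul_one]
  have hne : ∀ m, u m ≠ (r : ℂ) := by
    intro m h
    have hr0 : (r : ℂ) ≠ 0 := by exact_mod_cast hr.ne'
    have h1 : Complex.exp (((1 / (m + 1) : ℝ) : ℂ) * Complex.I) = 1 := by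
      have := h
      rw [hu] at this
      simp only at this
      exact mul_left_cancel₀ hr0 (by rw [this, mul_one])
    rw [Complex.exp_eq_one_iff] at h1
    obtain ⟨k, hk⟩ := h1
    have hI : Complex.I ≠ 0 := Complex.I_ne_zero
    have h2 : ((1 / (m + 1) : ℝ) : ℂ) = (k : ℂ) * (2 * (Real.pi : ℂ)) := by
      apply mul_right_cancel₀ hI
      rw [hk]; ring
    have hreal : (1 / (m + 1) : ℝ) = (k : ℝ) * (2 * Real.pi) := by
      exact_mod_cast h2
    have hpos : (0:ℝ) < 1 / (m + 1) := by positivity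
    have hlt : (1 / (m + 1) : ℝ) ≤ 1 := by
      rw [div_le_one (by positivity)]; linarith [Nat.cast_nonneg (α := ℝ) m]
    rcases le_or_gt (k : ℝ) 0 with hk0 | hk0
    · nlinarith [Real.pi_pos]
    · have : (1:ℝ) ≤ (k:ℝ) := by exact_mod_cast (by exact_mod_cast hk0 : (0:ℤ) < k)
      nlinarith [Real.pi_gt_three]
  have htend : Tendsto u atTop (nhdsWithin (r : ℂ) {(r:ℂ)}ᶜ) := by
    rw [tendsto_nhdsWithin_iff]
    refine ⟨?_, Eventually.of_forall fun m => hne m⟩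
    have h1 : Tendsto (fun m : ℕ => (1 / (m + 1) : ℝ)) atTop (nhds 0) :=
      tendsto_one_div_add_atTop_nhds_zero_nat
    have h2 : Tendsto (fun m : ℕ => ((1 / (m + 1) : ℝ) : ℂ) * Complex.I) atTop (nhds 0) := by
      have := (Complex.continuous_ofReal.tendsto 0).comp h1
      simpa using this.mul_const Complex.I
    have h3 := (Complex.continuous_exp.tendsto 0).comp h2
    have h4 := h3.const_mul (r : ℂ)
    simpa [hu] using h4
  exact htend.frequently (Frequently.of_forall fun m => h _ (habs m))

lemma key (n : ℕ) (r : ℝ) (hr : 0 < r) (F : Fin (n + 1) → ℂ → ℂ)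
    (hF : ∀ k, Differentiable ℂ (F k))
    (h0 : ∀ z : ℂ, ‖z‖ = r → ∑ k : Fin (n + 1), F k z * (conj z) ^ (k : ℕ) = 0) :
    ∀ z : ℂ, ∑ k : Fin (n + 1), F k z * ((r : ℂ) ^ 2) ^ (k : ℕ) * z ^ (n - (k : ℕ)) = 0 := by
  set H : ℂ → ℂ := fun z => ∑ k : Fin (n + 1), F k z * ((r : ℂ) ^ 2) ^ (k : ℕ) * z ^ (n - (k : ℕ))
    with hH
  have hdiff : Differentiable ℂ H := by
    apply Differentiable.fun_sum
    intro k _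
    exact ((hF k).mul (differentiable_const _)).mul (differentiable_pow _)
  have hcirc : ∀ z : ℂ, ‖z‖ = r → H z = 0 := by
    intro z hz
    have hz0 : z ≠ 0 := by
      intro h; rw [h] at hz; simp at hz; exact hr.ne' hz.symm
    have hmul : z * conj z = ((r : ℂ) ^ 2) := by
      rw [Complex.mul_conj]
      rw [Complex.normSq_eq_norm_sq, hz]
      push_cast; ring
    have : H z = z ^ n * ∑ k : Fin (n + 1), F k z * (conj z) ^ (k : ℕ) := by
      rw [hH, Finset.mul_sum]
      apply Finset.sum_congr rfl
      intro k _
      have hk : (k : ℕ) ≤ n := Nat.lt_succ_iff.mp k.2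
      have hpow : ((r : ℂ) ^ 2) ^ (k : ℕ) * z ^ (n - (k : ℕ)) = z ^ n * (conj z) ^ (k : ℕ) := by
        rw [← hmul, mul_pow, mul_right_comm, ← pow_add, Nat.add_sub_cancel' hk]
      rw [mul_assoc, hpow]; ring
    rw [this, h0 z hz, mul_zero]
  have hana : AnalyticOnNhd ℂ H Set.univ := analyticOnNhd_univ_iff_differentiable.mpr hdiff
  have heq : Set.EqOn H 0 Set.univ :=
    hana.eqOn_zero_of_preconnected_of_frequently_eq_zero isPreconnected_univ (Set.mem_univ _)
      (circle_freq r hr H hcirc)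
  intro z
  exact heq (Set.mem_univ z)

/-- If a polyanalytic function `F(z) = Σ_{k=0}^n F_k(z) (conj z)^k` with
entire coefficient functions `F_k` vanishes on every circle `|z| = ηk`, `k ∈ ℕ`, `k ≥ 1`,
then it vanishes identically. -/
theorem polyanalytic_vanishing_on_circles
    (n : ℕ) (η : ℝ) (hη : 0 < η) (F : Fin (n + 1) → ℂ → ℂ)
    (hF : ∀ k, Differentiable ℂ (F k))
    (hzero : ∀ z : ℂ, (∃ k : ℕ, 0 < k ∧ ‖z‖ = η * k) →
      ∑ k : Fin (n + 1), F k z * (conj z) ^ (k : ℕ) = 0) :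
    ∀ z : ℂ, ∑ k : Fin (n + 1), F k z * (conj z) ^ (k : ℕ) = 0 := by
  -- radii
  set r : Fin (n + 1) → ℝ := fun j => η * (j + 1) with hrdef
  have hrpos : ∀ j, 0 < r j := by
    intro j; apply mul_pos hη; positivity
  have hkey : ∀ j : Fin (n + 1), ∀ z : ℂ,
      ∑ k : Fin (n + 1), F k z * ((r j : ℂ) ^ 2) ^ (k : ℕ) * z ^ (n - (k : ℕ)) = 0 := by
    intro j
    apply key n (r j) (hrpos j) F hF
    intro z hz
    apply hzero
    exact ⟨j + 1, Nat.succ_pos _, by rw [hz, hrdef]; push_cast; ring⟩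
  -- Vandermonde step
  have hcoef : ∀ z : ℂ, ∀ k : Fin (n + 1), F k z * z ^ (n - (k : ℕ)) = 0 := by
    intro z
    set x : Fin (n + 1) → ℂ := fun j => ((r j : ℂ)) ^ 2 with hx
    have hinj : Function.Injective x := by
      intro a b hab
      have h1 : ((r a ^ 2 : ℝ) : ℂ) = ((r b ^ 2 : ℝ) : ℂ) := by push_cast; simpa [hx] using hab
      have h2 : (r a) ^ 2 = (r b) ^ 2 := by exact_mod_cast h1
      have h3 : r a = r b := by
        nlinarith [hrpos a, hrpos b]
      have : (a : ℝ) = (b : ℝ) := by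
        have := mul_left_cancel₀ hη.ne' h3
        linarith
      exact Fin.ext (by exact_mod_cast this)
    have hv := Matrix.eq_zero_of_forall_index_sum_pow_mul_eq_zero hinj
      (f := x) (v := fun k => F k z * z ^ (n - (k : ℕ))) ?_
    · intro k; exact congrFun hv k
    · intro j
      have := hkey j z
      rw [← this]
      apply Finset.sum_congr rfl
      intro k _
      ring
  -- F 0 vanishes at 0 by continuity
  have hFz : ∀ z : ℂ, z ≠ 0 → ∀ k, F k z = 0 := by
    intro z hz k
    have := hcoef z k
    have hzp : z ^ (n - (k : ℕ)) ≠ 0 := pow_ne_zero _ hz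
    exact (mul_eq_zero.mp this).resolve_right hzp
  intro z
  rcases eq_or_ne z 0 with rfl | hz
  · have hF00 : F 0 0 = 0 := by
      have hseq : Filter.Tendsto (fun m : ℕ => F 0 ((1 / (m + 1) : ℝ) : ℂ)) Filter.atTop
          (nhds (F 0 0)) := by
        have h1 : Filter.Tendsto (fun m : ℕ => (((1 / (m + 1) : ℝ)) : ℂ)) Filter.atTop (nhds 0) := by
          have := (Complex.continuous_ofReal.tendsto 0).comp tendsto_one_div_add_atTop_nhds_zero_nat
          simpa [Function.comp_def] using this
        exact ((hF 0).continuous.tendsto 0).comp h1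
      have hval : ∀ m : ℕ, F 0 ((1 / (m + 1) : ℝ) : ℂ) = 0 := by
        intro m
        apply hFz
        simp only [ne_eq, Complex.ofReal_eq_zero]
        positivity
      rw [funext hval] at hseq
      have hc : Filter.Tendsto (fun _ : ℕ => (0:ℂ)) Filter.atTop (nhds 0) := tendsto_const_nhds
      exact tendsto_nhds_unique hseq hc
    apply Finset.sum_eq_zero
    intro k _
    rcases eq_or_ne (k : ℕ) 0 with hk | hk
    · have : k = 0 := Fin.ext hk
      rw [this]
      simp [hF00]
    · simp [zero_pow hk]
  · apply Finset.sum_eq_zero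
    intro k _
    rw [hFz z hz k, zero_mul]
end
end

section
/- Let s ≥ 0. Let f ∈ A_{ϑ_s}(ℝ), i.e. f is a continuous function on ℝ vanishing at infinity whose Fourier transform satisfies ‖f‖_{A_{ϑ_s}} := ∫_ℝ |f̂(ξ)|·(1+|ξ|)^s dξ < ∞, and let g ∈ M¹_{ϑ_s}(ℝ), i.e. g ∈ L²(ℝ) with ‖g‖_{M¹_{ϑ_s}} := ∫_{ℝ²} |V_{h₀}g(z)|·(1+|z|)^s dz < ∞. Then the pointwise product f·g belongs to M¹_{ϑ_s}(ℝ) and ‖f·g‖_{M¹_{ϑ_s}} ≤ ‖f‖_{A_{ϑ_s}}·‖g‖_{M¹_{ϑ_s}}. -/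
noncomputable section
open MeasureTheory Complex Filter Set Metric
open scoped Real ENNReal NNReal ComplexConjugate Topology

/-- The short-time Fourier transform of `f ∈ L²(ℝ)` with window `g ∈ L²(ℝ)`:
`V_g f (x, ξ) = ∫ f(t) conj(g(t-x)) e^{-2πiξt} dt`. -/
def stftL2 (g f : ℝ → ℂ) (x ξ : ℝ) : ℂ :=
  ∫ t : ℝ, f t * conj (g (t - x)) * Complex.exp (-(2 * π * ξ * t) * Complex.I)

/-- The squared `L²(ℝ)`-norm as a lower integral. -/
def l2NormSq (f : ℝ → ℂ) : ℝ≥0∞ := ∫⁻ t : ℝ, (‖f t‖₊ : ℝ≥0∞) ^ 2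

open MeasureTheory

/-- The weighted `M¹_{ϑ_s}` norm of `g ∈ L²(ℝ)`, computed with respect to the Gaussian
window `h₀`: `∫_{ℝ²} |V_{h₀} g (z)| (1+|z|)^s dz`. -/
def m1WeightedNorm (h₀ g : ℝ → ℂ) (s : ℝ) : ℝ≥0∞ :=
  ∫⁻ z : ℂ, (‖stftL2 h₀ g z.re z.im‖₊ : ℝ≥0∞) * ENNReal.ofReal ((1 + ‖z‖) ^ s)

/-- Norm of a unimodular complex exponential. -/
lemma norm_cexp_real_mul_I {w : ℂ} (r : ℝ) (h : w = (r : ℂ) * Complex.I) :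
    ‖Complex.exp w‖ = 1 := by
  rw [h]; simpa using Complex.norm_exp_ofReal_mul_I r

/-- Submultiplicativity of the polynomial weight. -/
lemma weight_submul (s : ℝ) (hs : 0 ≤ s) (z : ℂ) (η : ℝ) :
    ENNReal.ofReal ((1 + ‖z‖) ^ s) ≤
      ENNReal.ofReal ((1 + |η|) ^ s) *
        ENNReal.ofReal ((1 + ‖z - Complex.I * η‖) ^ s) := by
  have h1 : ‖z‖ ≤ ‖z - Complex.I * η‖ + |η| := by
    calc ‖z‖ = ‖(z - Complex.I * η) + Complex.I * η‖ := by ring_nf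
    _ ≤ ‖z - Complex.I * η‖ + ‖Complex.I * η‖ :=
        norm_add_le _ _
    _ = ‖z - Complex.I * η‖ + |η| := by simp
  have ha : (0:ℝ) ≤ ‖z - Complex.I * η‖ := norm_nonneg _
  have hb : (0:ℝ) ≤ |η| := abs_nonneg η
  have h2 : 1 + ‖z‖ ≤ (1 + |η|) * (1 + ‖z - Complex.I * η‖) := by
    nlinarith
  calc ENNReal.ofReal ((1 + ‖z‖) ^ s)
      ≤ ENNReal.ofReal (((1 + |η|) * (1 + ‖z - Complex.I * η‖)) ^ s) :=
        ENNReal.ofReal_le_ofReal (Real.rpow_le_rpow (by positivity) h2 hs)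
    _ = _ := by
        rw [Real.mul_rpow (by positivity) (by positivity),
          ENNReal.ofReal_mul (by positivity)]

/-- If `f ∈ A_{ϑ_s}(ℝ)` (a `C₀` function which is the inverse Fourier
transform of a function `fhat` with `∫ |fhat(ξ)| (1+|ξ|)^s dξ < ∞`) and `g ∈ M¹_{ϑ_s}(ℝ)`,
then the pointwise product `f·g` lies in `M¹_{ϑ_s}(ℝ)` with
`‖fg‖_{M¹_{ϑ_s}} ≤ ‖f‖_{A_{ϑ_s}} ‖g‖_{M¹_{ϑ_s}}`. -/
theorem fourier_algebra_module
    (s : ℝ) (hs : 0 ≤ s)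
    (f fhat : ℝ → ℂ) (hf_cont : Continuous f)
    (hf_c0 : Filter.Tendsto f (Filter.cocompact ℝ) (nhds 0))
    (hfhat_int : Integrable (fun ξ : ℝ => ‖fhat ξ‖ * (1 + |ξ|) ^ s) volume)
    (hfhat_meas : AEStronglyMeasurable fhat volume)
    (hinv : ∀ t : ℝ, f t = ∫ ξ : ℝ, fhat ξ * Complex.exp ((2 * π * t * ξ) * Complex.I))
    (h₀ : ℝ → ℂ)
    (hh₀ : ∀ t : ℝ, h₀ t = (((2 : ℝ) ^ ((1 : ℝ)/4) * Real.exp (-(π * t ^ 2)) : ℝ) : ℂ))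
    (g : ℝ → ℂ) (hg : MemLp g 2 volume)
    (hgM1 : m1WeightedNorm h₀ g s < ⊤) :
    m1WeightedNorm h₀ (fun t => f t * g t) s < ⊤ ∧
      m1WeightedNorm h₀ (fun t => f t * g t) s ≤
        (∫⁻ ξ : ℝ, (‖fhat ξ‖₊ : ℝ≥0∞) * ENNReal.ofReal ((1 + |ξ|) ^ s)) *
          m1WeightedNorm h₀ g s := by
  -- measurable representatives
  set g' : ℝ → ℂ := hg.1.mk g with hg'def
  have hg'm : StronglyMeasurable g' := hg.1.stronglyMeasurable_mk
  have hgg' : g =ᵐ[volume] g' := hg.1.ae_eq_mk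
  have hg2' : MemLp g' 2 volume := hg.ae_eq hgg'
  set F : ℝ → ℂ := hfhat_meas.mk fhat with hFdef
  have hFm : StronglyMeasurable F := hfhat_meas.stronglyMeasurable_mk
  have hFf : fhat =ᵐ[volume] F := hfhat_meas.ae_eq_mk
  -- properties of the Gaussian window
  have hcont : Continuous h₀ := by
    have : h₀ = fun t => (((2 : ℝ) ^ ((1 : ℝ)/4) * Real.exp (-(π * t ^ 2)) : ℝ) : ℂ) :=
      funext hh₀
    rw [this]; fun_prop
  have hconj : ∀ u : ℝ, conj (h₀ u) = h₀ u := by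
    intro u; rw [hh₀ u]; exact Complex.conj_ofReal _
  have hmem : ∀ x : ℝ, MemLp (fun t : ℝ => h₀ (t - x)) 2 volume := by
    intro x
    have hma : AEStronglyMeasurable (fun t : ℝ => h₀ (t - x)) volume :=
      (hcont.comp (continuous_id.sub continuous_const)).aestronglyMeasurable
    rw [memLp_two_iff_integrable_sq_norm hma]
    have hint : Integrable
        (fun t : ℝ => ((2:ℝ) ^ ((1:ℝ)/4)) ^ 2 * Real.exp (-(2*π) * (t - x) ^ 2)) volume :=
      ((integrable_exp_neg_mul_sq (by positivity)).comp_sub_right x).const_mul _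
    refine hint.congr (Filter.Eventually.of_forall fun t => ?_)
    have hval : ‖h₀ (t - x)‖ ^ 2
        = ((2:ℝ) ^ ((1:ℝ)/4)) ^ 2 * Real.exp (-(2*π) * (t - x) ^ 2) := by
      rw [hh₀, Complex.norm_real, Real.norm_eq_abs, abs_of_pos (by positivity), mul_pow,
        pow_two (Real.exp _), ← Real.exp_add,
        show -(π * (t - x) ^ 2) + -(π * (t - x) ^ 2) = -(2*π) * (t - x) ^ 2 from by ring]
    exact hval.symm
  -- integrability of g' against the shifted window
  have hK : ∀ x : ℝ, Integrable (fun t : ℝ => g' t * conj (h₀ (t - x))) volume := by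
    intro x
    have h2 : MemLp (fun t : ℝ => conj (h₀ (t - x))) 2 volume := by
      simp only [hconj]; exact hmem x
    have : ENNReal.HolderTriple 2 2 1 := ⟨by rw [ENNReal.inv_two_add_inv_two, inv_one]⟩
    have := h2.smul (r := 1) hg2'
    · have h1 := memLp_one_iff_integrable.mp this
      exact h1.congr (Filter.Eventually.of_forall fun t => by simp [smul_eq_mul])
  -- fhat integrable
  have hfhat1 : Integrable fhat volume := by
    refine hfhat_int.mono' hfhat_meas (Filter.Eventually.of_forall fun ξ => ?_)
    have h1 : (1:ℝ) ≤ (1 + |ξ|) ^ s :=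
      Real.one_le_rpow (by simp [abs_nonneg]) hs
    calc ‖fhat ξ‖ = ‖fhat ξ‖ * 1 := by ring
      _ ≤ ‖fhat ξ‖ * (1 + |ξ|) ^ s := by
          exact mul_le_mul_of_nonneg_left h1 (norm_nonneg _)
  have hF1 : Integrable F volume := hfhat1.congr hFf
  -- stft of g equals stft of g'
  have hstft_g : ∀ x ξ : ℝ, stftL2 h₀ g x ξ = stftL2 h₀ g' x ξ := by
    intro x ξ
    refine integral_congr_ae ?_
    filter_upwards [hgg'] with t ht
    rw [ht]
  -- the key convolution identity
  have key : ∀ x ξ : ℝ, stftL2 h₀ (fun t => f t * g t) x ξ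
      = ∫ η : ℝ, F η * stftL2 h₀ g' x (ξ - η) := by
    intro x ξ
    have e1 : stftL2 h₀ (fun t => f t * g t) x ξ
        = ∫ t : ℝ, (f t * g' t) * conj (h₀ (t - x)) *
            Complex.exp (-(2 * (π:ℂ) * ξ * t) * Complex.I) := by
      refine integral_congr_ae ?_
      filter_upwards [hgg'] with t ht
      simp only [ht]
    rw [e1]
    have e2 : ∀ t : ℝ, (f t * g' t) * conj (h₀ (t - x)) *
          Complex.exp (-(2 * (π:ℂ) * ξ * t) * Complex.I)
        = ∫ η : ℝ, F η * (g' t * conj (h₀ (t - x)) *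
            Complex.exp (-(2 * (π:ℂ) * ((ξ - η : ℝ) : ℂ) * t) * Complex.I)) := by
      intro t
      rw [hinv t]
      have hFe : (∫ η : ℝ, fhat η * Complex.exp ((2 * (π:ℂ) * t * η) * Complex.I))
          = ∫ η : ℝ, F η * Complex.exp ((2 * (π:ℂ) * t * η) * Complex.I) := by
        refine integral_congr_ae ?_
        filter_upwards [hFf] with η hη
        rw [hη]
      rw [hFe, ← integral_mul_const, ← integral_mul_const, ← integral_mul_const]
      refine integral_congr_ae (Filter.Eventually.of_forall fun η => ?_)
      have harg : (-(2 * (π:ℂ) * ((ξ - η : ℝ) : ℂ) * t) * Complex.I)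
          = ((2 * (π:ℂ) * t * η) * Complex.I) + ((-(2 * (π:ℂ) * ξ * t)) * Complex.I) := by
        push_cast; ring
      simp only [harg, Complex.exp_add]
      ring
    rw [integral_congr_ae (Filter.Eventually.of_forall e2)]
    -- swap the two integrals
    have hswap : Integrable (Function.uncurry fun (t : ℝ) (η : ℝ) =>
        F η * (g' t * conj (h₀ (t - x)) *
          Complex.exp (-(2 * (π:ℂ) * ((ξ - η : ℝ) : ℂ) * t) * Complex.I)))
        ((volume : Measure ℝ).prod volume) := by
      have hbm : AEStronglyMeasurable (Function.uncurry fun (t : ℝ) (η : ℝ) =>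
          F η * (g' t * conj (h₀ (t - x)) *
            Complex.exp (-(2 * (π:ℂ) * ((ξ - η : ℝ) : ℂ) * t) * Complex.I)))
          ((volume : Measure ℝ).prod volume) := by
        refine StronglyMeasurable.aestronglyMeasurable ?_
        refine ((hFm.comp_measurable measurable_snd).mul ?_)
        refine ((hg'm.comp_measurable measurable_fst).mul ?_).mul ?_
        · exact ((continuous_conj.comp (hcont.comp
            (continuous_fst.sub continuous_const))).stronglyMeasurable)
        · exact (Complex.continuous_exp.comp (by fun_prop)).stronglyMeasurable
      have hbound : Integrable (fun p : ℝ × ℝ =>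
          ‖g' p.1 * conj (h₀ (p.1 - x))‖ * ‖F p.2‖) ((volume : Measure ℝ).prod volume) :=
        (hK x).norm.mul_prod hF1.norm
      refine hbound.mono' hbm (Filter.Eventually.of_forall fun p => ?_)
      have he : ‖Complex.exp (-(2 * (π:ℂ) * ((ξ - p.2 : ℝ) : ℂ) * p.1) * Complex.I)‖ = 1 :=
        norm_cexp_real_mul_I (-(2 * π * (ξ - p.2) * p.1)) (by push_cast; ring)
      simp only [Function.uncurry, norm_mul, he, mul_one]
      exact le_of_eq (by ring)
    rw [integral_integral_swap hswap]
    refine integral_congr_ae (Filter.Eventually.of_forall fun η => ?_)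
    show (∫ t : ℝ, F η * (g' t * conj (h₀ (t - x)) *
        Complex.exp (-(2 * (π:ℂ) * ((ξ - η : ℝ) : ℂ) * t) * Complex.I))) = _
    rw [integral_const_mul]
    rfl
  -- measurability of the stft of g'
  have hstm : StronglyMeasurable fun z : ℂ => stftL2 h₀ g' z.re z.im := by
    have hΦ : StronglyMeasurable fun p : ℂ × ℝ =>
        g' p.2 * conj (h₀ (p.2 - p.1.re)) *
          Complex.exp (-(2 * (π:ℂ) * p.1.im * p.2) * Complex.I) := by
      refine ((hg'm.comp_measurable measurable_snd).mul ?_).mul ?_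
      · exact (continuous_conj.comp (hcont.comp
          (continuous_snd.sub (Complex.continuous_re.comp continuous_fst)))).stronglyMeasurable
      · exact (Complex.continuous_exp.comp (by fun_prop)).stronglyMeasurable
    exact hΦ.integral_prod_right'
  have hGmeas : Measurable fun w : ℂ =>
      (‖stftL2 h₀ g' w.re w.im‖₊ : ℝ≥0∞) * ENNReal.ofReal ((1 + ‖w‖) ^ s) := by
    refine (hstm.measurable.nnnorm.coe_nnreal_ennreal).mul ?_
    exact (ENNReal.continuous_ofReal.comp ((continuous_const.add
      continuous_norm).rpow_const fun _ => Or.inr hs)).measurable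
  -- pointwise bound on the weighted stft of f*g
  set G : ℂ → ℝ≥0∞ := fun w =>
    (‖stftL2 h₀ g' w.re w.im‖₊ : ℝ≥0∞) * ENNReal.ofReal ((1 + ‖w‖) ^ s) with hGdef
  set c : ℝ → ℝ≥0∞ := fun η => (‖F η‖₊ : ℝ≥0∞) * ENNReal.ofReal ((1 + |η|) ^ s) with hcdef
  have hcm : Measurable c := by
    refine (hFm.measurable.nnnorm.coe_nnreal_ennreal).mul ?_
    exact (ENNReal.continuous_ofReal.comp ((continuous_const.add
      _root_.continuous_abs).rpow_const fun _ => Or.inr hs)).measurable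
  have hre : ∀ (z : ℂ) (η : ℝ), (z - Complex.I * η).re = z.re := by intros; simp
  have him : ∀ (z : ℂ) (η : ℝ), (z - Complex.I * η).im = z.im - η := by intros; simp
  have keybd : ∀ z : ℂ,
      (‖stftL2 h₀ (fun t => f t * g t) z.re z.im‖₊ : ℝ≥0∞) *
          ENNReal.ofReal ((1 + ‖z‖) ^ s)
        ≤ ∫⁻ η : ℝ, c η * G (z - Complex.I * η) := by
    intro z
    rw [key z.re z.im]
    calc (‖∫ η : ℝ, F η * stftL2 h₀ g' z.re (z.im - η)‖₊ : ℝ≥0∞) *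
          ENNReal.ofReal ((1 + ‖z‖) ^ s)
        ≤ (∫⁻ η : ℝ, (‖F η * stftL2 h₀ g' z.re (z.im - η)‖₊ : ℝ≥0∞)) *
            ENNReal.ofReal ((1 + ‖z‖) ^ s) :=
          mul_le_mul_left (enorm_integral_le_lintegral_enorm _) _
      _ = ∫⁻ η : ℝ, ((‖F η‖₊ : ℝ≥0∞) * (‖stftL2 h₀ g' z.re (z.im - η)‖₊ : ℝ≥0∞)) *
            ENNReal.ofReal ((1 + ‖z‖) ^ s) := by
          rw [← lintegral_mul_const' _ _ ENNReal.ofReal_ne_top]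
          simp only [nnnorm_mul, ENNReal.coe_mul]
      _ ≤ ∫⁻ η : ℝ, c η * G (z - Complex.I * η) := by
          refine lintegral_mono fun η => ?_
          rw [hGdef, hcdef]
          simp only [hre, him]
          calc ((‖F η‖₊ : ℝ≥0∞) * (‖stftL2 h₀ g' z.re (z.im - η)‖₊ : ℝ≥0∞)) *
                ENNReal.ofReal ((1 + ‖z‖) ^ s)
              ≤ ((‖F η‖₊ : ℝ≥0∞) * (‖stftL2 h₀ g' z.re (z.im - η)‖₊ : ℝ≥0∞)) *
                (ENNReal.ofReal ((1 + |η|) ^ s) *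
                  ENNReal.ofReal ((1 + ‖z - Complex.I * η‖) ^ s)) :=
                mul_le_mul_right (weight_submul s hs z η) _
            _ = _ := by ring
  -- the main estimate
  have hmain : m1WeightedNorm h₀ (fun t => f t * g t) s ≤
      (∫⁻ η : ℝ, c η) * m1WeightedNorm h₀ g' s := by
    calc m1WeightedNorm h₀ (fun t => f t * g t) s
        ≤ ∫⁻ z : ℂ, ∫⁻ η : ℝ, c η * G (z - Complex.I * η) := lintegral_mono keybd
      _ = ∫⁻ η : ℝ, ∫⁻ z : ℂ, c η * G (z - Complex.I * η) := by
          refine lintegral_lintegral_swap ?_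
          refine Measurable.aemeasurable ?_
          refine ((hcm.comp measurable_snd).mul ?_)
          refine hGmeas.comp ?_
          exact measurable_fst.sub
            ((Complex.measurable_ofReal.comp measurable_snd).const_mul Complex.I)
      _ = ∫⁻ η : ℝ, c η * ∫⁻ z : ℂ, G (z - Complex.I * η) := by
          refine lintegral_congr fun η => ?_
          exact lintegral_const_mul' _ _ (by
            rw [hcdef]
            exact ENNReal.mul_ne_top ENNReal.coe_ne_top ENNReal.ofReal_ne_top)
      _ = ∫⁻ η : ℝ, c η * m1WeightedNorm h₀ g' s := by
          refine lintegral_congr fun η => ?_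
          rw [lintegral_sub_right_eq_self G (Complex.I * η)]
          rfl
      _ = (∫⁻ η : ℝ, c η) * m1WeightedNorm h₀ g' s :=
          lintegral_mul_const _ hcm
  -- identify the factors
  have hcint : (∫⁻ η : ℝ, c η)
      = ∫⁻ ξ : ℝ, (‖fhat ξ‖₊ : ℝ≥0∞) * ENNReal.ofReal ((1 + |ξ|) ^ s) := by
    refine lintegral_congr_ae ?_
    filter_upwards [hFf] with η hη
    rw [hcdef]; simp only [hη]
  have hm1g : m1WeightedNorm h₀ g' s = m1WeightedNorm h₀ g s := by
    refine lintegral_congr fun z => ?_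
    rw [hstft_g]
  rw [hcint, hm1g] at hmain
  have hAfin : (∫⁻ ξ : ℝ, (‖fhat ξ‖₊ : ℝ≥0∞) * ENNReal.ofReal ((1 + |ξ|) ^ s)) < ⊤ := by
    have heq : ∀ ξ : ℝ, (‖fhat ξ‖₊ : ℝ≥0∞) * ENNReal.ofReal ((1 + |ξ|) ^ s)
        = (‖‖fhat ξ‖ * (1 + |ξ|) ^ s‖₊ : ℝ≥0∞) := by
      intro ξ
      rw [← enorm_eq_nnnorm, ← enorm_eq_nnnorm, ← ofReal_norm, ← ofReal_norm,
        ← ENNReal.ofReal_mul (norm_nonneg _)]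
      congr 1
      rw [norm_mul, Real.norm_eq_abs, Real.norm_eq_abs, abs_norm,
        _root_.abs_of_nonneg (Real.rpow_nonneg (by positivity) s)]
    calc (∫⁻ ξ : ℝ, (‖fhat ξ‖₊ : ℝ≥0∞) * ENNReal.ofReal ((1 + |ξ|) ^ s))
        = ∫⁻ ξ : ℝ, (‖‖fhat ξ‖ * (1 + |ξ|) ^ s‖₊ : ℝ≥0∞) := lintegral_congr fun ξ => heq ξ
      _ < ⊤ := hfhat_int.2
  constructor
  · exact lt_of_le_of_lt hmain (ENNReal.mul_lt_top hAfin hgM1)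
  · exact hmain
end
end
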